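/- Let B be an n×n skew-symmetrizable integer matrix and σ_{s+1} = (k_1,…,k_{s+1}) a sequence of column indices. Write [B_{σ_i}; C_{σ_i}] = μ_{k_i}⋯μ_{k_1}([B; I_n]). If the column index k_{s+1} is green in C_{σ_s} and j ≠ k_{s+1} is also green in C_{σ_s}, then j is green in C_{σ_{s+1}}. -/

import Mathlib

variable {ι : Type} [Fintype ι] [DecidableEq ι]

/-- Mutation in direction `k` of a `2N × N` integer matrix, rows indexed by
`ι ⊕ ι` (the principal part is the `Sum.inl` block). -/
def mutate (k : ι) (B : Matrix (ι ⊕ ι) ι ℤ) : Matrix (ι ⊕ ι) ι ℤ :=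
  fun i j =>
    if i = Sum.inl k ∨ j = k then -B i j
    else B i j + Int.sign (B i k) * max (B i k * B (Sum.inl k) j) 0

/-- Apply a sequence of mutations `μ_{k_s} ⋯ μ_{k_1}` (the list is `[k_1, …, k_s]`). -/
def mutateSeq (L : List ι) (B : Matrix (ι ⊕ ι) ι ℤ) : Matrix (ι ⊕ ι) ι ℤ :=
  L.foldl (fun M k => mutate k M) B

/-- The C-matrix of `B` along the mutation sequence `L`: the lower block of
the mutation of `[B; I]`. -/
def Cmat (B : Matrix ι ι ℤ) (L : List ι) : Matrix ι ι ℤ :=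
  fun i j => mutateSeq L (Matrix.fromRows B 1) (Sum.inr i) j

/-- A column index `j` is green in the C-matrix along `L` if its column is entrywise `≥ 0`. -/
def IsGreen (B : Matrix ι ι ℤ) (L : List ι) (j : ι) : Prop :=
  ∀ i, 0 ≤ Cmat B L i j

/-- `L` is a green sequence: each mutation occurs at a green index of the current C-matrix. -/
def IsGreenSeq (B : Matrix ι ι ℤ) (L : List ι) : Prop :=
  ∀ (t : ℕ) (h : t < L.length), IsGreen B (L.take t) (L.get ⟨t, h⟩)

/-- `L` is a green-to-red sequence: the final C-matrix is entrywise `≤ 0`. -/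
def IsGreenToRed (B : Matrix ι ι ℤ) (L : List ι) : Prop :=
  ∀ i j, Cmat B L i j ≤ 0

/-- `L` is a maximal green sequence of `B`. -/
def IsMGS (B : Matrix ι ι ℤ) (L : List ι) : Prop :=
  IsGreenSeq B L ∧ IsGreenToRed B L

/-- If `k` is green after the sequence `L` and `j ≠ k` is also green, then `j`
remains green after further mutating at `k`. -/
theorem green_stays_green {n : ℕ} (B : Matrix (Fin n) (Fin n) ℤ)
    (S : Fin n → ℤ) (hS : ∀ i, 0 < S i)
    (hskew : ∀ i j, S i * B i j = -(S j * B j i))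
    (L : List (Fin n)) (k j : Fin n) (hjk : j ≠ k)
    (hk : IsGreen B L k) (hj : IsGreen B L j) :
    IsGreen B (L ++ [k]) j := by
  intro i
  have hC : Cmat B (L ++ [k]) i j
      = mutate k (mutateSeq L (Matrix.fromRows B 1)) (Sum.inr i) j := by
    simp [Cmat, mutateSeq, List.foldl_append]
  rw [hC, mutate]
  have hne : ¬(Sum.inr i = Sum.inl k ∨ j = k) := by
    rintro (h | h)
    · cases h
    · exact hjk h
  rw [if_neg hne]
  have h1 : (0:ℤ) ≤ mutateSeq L (Matrix.fromRows B 1) (Sum.inr i) j := hj i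
  have h2 : (0:ℤ) ≤ mutateSeq L (Matrix.fromRows B 1) (Sum.inr i) k := hk i
  have h3 : (0:ℤ) ≤ Int.sign (mutateSeq L (Matrix.fromRows B 1) (Sum.inr i) k) :=
    Int.sign_nonneg_iff.mpr h2
  have h4 : (0:ℤ) ≤ max (mutateSeq L (Matrix.fromRows B 1) (Sum.inr i) k *
      mutateSeq L (Matrix.fromRows B 1) (Sum.inl k) j) 0 := le_max_right _ _
  exact add_nonneg h1 (mul_nonneg h3 h4)
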